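/- arXiv:1402.3628 — 4 statements merged into one kernel-verified Lean document; each statement's English description precedes it below -/
import Mathlib

section
/- Let k be a field, Q ∈ k[U] a polynomial of degree d ≥ 1 that splits over an algebraic closure with distinct roots (Q separable), and W ∈ k[U] a polynomial with deg W < d, viewed as an element of k[U]/(Q). Let T, S ∈ k[U] be the quotient and remainder of the Euclidean division of U·W·Q' by Q (where Q' is the formal derivative of Q). Then the sum of W(a) over all roots a of Q in the algebraic closure equals T(0). -/
open Polynomial

open scoped Classical

/-- Lemma (residue-sum lemma): for `Q` monic separable splitting with distinct roots over
the algebraic closure, `W` of degree `< deg Q`, and `T` the quotient of the Euclidean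
division of `U·W·Q'` by `Q`, the sum of `W(a)` over the roots `a` of `Q` equals `T(0)`. -/
theorem sum_eval_roots_eq_quotient_eval_zero
    (k : Type*) [Field k] (Q W : k[X])
    (hQm : Q.Monic) (hQsep : Q.Separable) (hd : 1 ≤ Q.natDegree)
    (hW : W.degree < Q.degree)
    (T : k[X]) (hT : T = (X * W * derivative Q) /ₘ Q) :
    ∑ a ∈ (Q.aroots (AlgebraicClosure k)).toFinset, Polynomial.aeval a W
      = algebraMap k (AlgebraicClosure k) (T.eval 0) := by
  classical
  set K := AlgebraicClosure k
  set f : k →+* K := algebraMap k K with hf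
  set Wk : K[X] := W.map f with hWk
  set Qk : K[X] := Q.map f with hQkdef
  have hQkm : Qk.Monic := hQm.map f
  have hQk0 : Qk ≠ 0 := hQkm.ne_zero
  have hnodup : Qk.roots.Nodup := nodup_roots (hQsep.map)
  set s : Finset K := Qk.roots.toFinset with hs
  have hsval : s.val = Qk.roots := by
    rw [hs, Multiset.toFinset_val, hnodup.dedup]
  -- Q factors
  have hQfact : Qk = ∏ a ∈ s, (X - C a) := by
    rw [Finset.prod_eq_multiset_prod, hsval]
    exact (IsAlgClosed.splits Qk).eq_prod_roots_of_monic hQkm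
  set P : K → K[X] := fun a => ∏ b ∈ s.erase a, (X - C b) with hP
  have hPmul : ∀ a ∈ s, (X - C a) * P a = Qk := fun a ha => by
    rw [hP, hQfact]
    simpa using Finset.mul_prod_erase s (fun b => X - C b) ha
  have hPm : ∀ a, (P a).Monic := fun a => monic_prod_of_monic _ _ fun b _ => monic_X_sub_C b
  -- derivative
  have hder : derivative Qk = ∑ a ∈ s, P a := by
    rw [hQfact, Finset.prod_eq_multiset_prod, derivative_prod, Finset.sum_eq_multiset_sum]
    congr 1
    refine Multiset.map_congr rfl fun a ha => ?_
    simp [hP, derivative_X_sub_C, Finset.prod_eq_multiset_prod, Finset.erase_val]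
  -- the local quotients
  set q : K → K[X] := fun a => (X * Wk) /ₘ (X - C a) with hq
  have hdiv : ∀ a : K, X * Wk = (X - C a) * q a + C (a * Wk.eval a) := fun a => by
    have h := modByMonic_add_div (X * Wk) (X - C a)
    rw [modByMonic_X_sub_C_eq_C_eval, eval_mul, eval_X] at h
    rw [← h]; ring
  -- key identity
  have hkey : (∑ a ∈ s, C (a * Wk.eval a) * P a) + Qk * (∑ a ∈ s, q a)
      = X * Wk * derivative Qk := by
    rw [hder, Finset.mul_sum, Finset.mul_sum, ← Finset.sum_add_distrib]
    refine (Finset.sum_congr rfl fun a ha => ?_).symm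
    rw [hdiv a, add_mul, ← hPmul a ha]
    ring
  -- degree bound
  have hdegrem : (∑ a ∈ s, C (a * Wk.eval a) * P a).degree < Qk.degree := by
    refine lt_of_le_of_lt (degree_sum_le _ _) ((Finset.sup_lt_iff ?_).2 fun a ha => ?_)
    · exact bot_lt_iff_ne_bot.2 fun h => hQk0 (degree_eq_bot.1 h)
    · have h1 : Qk.degree = 1 + (P a).degree := by
        rw [← hPmul a ha, degree_mul, degree_X_sub_C]
      have h2 : (P a).degree < Qk.degree := by
        rw [h1, degree_eq_natDegree (hPm a).ne_zero]
        exact_mod_cast (by omega : (P a).natDegree < 1 + (P a).natDegree)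
      refine lt_of_le_of_lt ?_ h2
      calc (C (a * Wk.eval a) * P a).degree
          ≤ (C (a * Wk.eval a)).degree + (P a).degree := degree_mul_le _ _
        _ ≤ 0 + (P a).degree := by gcongr; exact degree_C_le
        _ = (P a).degree := zero_add _
  have hTk : T.map f = ∑ a ∈ s, q a := by
    rw [hT, map_divByMonic f hQm, Polynomial.map_mul, Polynomial.map_mul, map_X, ← derivative_map]
    exact (div_modByMonic_unique _ _ hQkm ⟨hkey, hdegrem⟩).1
  -- q a eval 0 = Wk.eval a
  have hqeval : ∀ a ∈ s, (q a).eval 0 = Wk.eval a := by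
    intro a _
    by_cases ha0 : a = 0
    · have h2 : X * Wk = X * q 0 := by simpa using hdiv 0
      have h3 : Wk = q 0 := mul_left_cancel₀ (X_ne_zero (R := K)) h2
      rw [ha0, ← h3]
    · have h := congrArg (eval 0) (hdiv a)
      simp only [eval_mul, eval_add, eval_X, eval_sub, eval_C, zero_mul, zero_sub] at h
      have h2 : a * (q a).eval 0 = a * Wk.eval a := by linear_combination h
      exact mul_left_cancel₀ ha0 h2
  -- finish
  have hcoeff : f (T.eval 0) = (T.map f).eval 0 := by
    rw [← coeff_zero_eq_eval_zero, ← coeff_zero_eq_eval_zero, coeff_map]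
  rw [hcoeff, hTk, eval_finset_sum]
  refine Finset.sum_congr rfl fun a ha => ?_
  rw [hqeval a ha, hWk, eval_map, aeval_def]
end

section
/- Every positive integer ℓ can be written as a sum of four integer squares ℓ = a² + b² + c² + d²; moreover if ℓ > 1 the representation can be chosen such that a² + b² is not divisible by ℓ. -/
private lemma normPair (a b : ℕ) (h : 0 < a ^ 2 + b ^ 2) :
    ∃ p q : ℕ, 0 < p ∧ p ^ 2 + q ^ 2 = a ^ 2 + b ^ 2 := by
  rcases Nat.eq_zero_or_pos a with ha | ha
  · subst ha
    have hb : 0 < b := Nat.pos_of_ne_zero (fun e => by simp [e] at h)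
    exact ⟨b, 0, hb, by ring⟩
  · exact ⟨a, b, ha, rfl⟩

private lemma pair_split (ℓ p q r s : ℕ) (h : ℓ = p ^ 2 + q ^ 2 + r ^ 2 + s ^ 2)
    (hp : 0 < p) (hq : 0 < q) :
    ∃ a b c d : ℕ, ℓ = a ^ 2 + b ^ 2 + c ^ 2 + d ^ 2 ∧
      0 < a ^ 2 + b ^ 2 ∧ 0 < c ^ 2 + d ^ 2 := by
  refine ⟨p, r, q, s, by rw [h]; ring, ?_, ?_⟩
  · exact Nat.add_pos_left (pow_pos hp 2) _
  · exact Nat.add_pos_left (pow_pos hq 2) _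

private lemma square_case (ℓ w : ℕ) (hℓ : 2 ≤ ℓ) (heq : w ^ 2 = ℓ)
    (IH : ∀ m, m < ℓ → 2 ≤ m →
      ∃ a b c d : ℕ, m = a ^ 2 + b ^ 2 + c ^ 2 + d ^ 2 ∧
        0 < a ^ 2 + b ^ 2 ∧ 0 < c ^ 2 + d ^ 2) :
    ∃ a b c d : ℕ, ℓ = a ^ 2 + b ^ 2 + c ^ 2 + d ^ 2 ∧
      0 < a ^ 2 + b ^ 2 ∧ 0 < c ^ 2 + d ^ 2 := by
  have hw2 : 2 ≤ w := by nlinarith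
  have hwl : w < ℓ := by nlinarith
  rcases Nat.even_or_odd w with he | ho
  · obtain ⟨j, hj⟩ := he
    have hj0 : 0 < j := by omega
    refine ⟨j, j, j, j, by rw [← heq, hj]; ring, ?_, ?_⟩ <;>
      exact Nat.add_pos_left (pow_pos hj0 2) _
  · obtain ⟨a₀, b₀, c₀, d₀, heqw₀, h1, h2⟩ := IH w hwl hw2
    obtain ⟨a, b, ha, hab⟩ := normPair a₀ b₀ h1
    obtain ⟨c, d, hc, hcd⟩ := normPair c₀ d₀ h2
    have heqw : w = a ^ 2 + b ^ 2 + c ^ 2 + d ^ 2 := by linarith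
    set E : ℕ := ((a : ℤ) ^ 2 - b ^ 2 - c ^ 2 - d ^ 2).natAbs with hEdef
    have hid : ℓ = E ^ 2 + (2 * a * b) ^ 2 + (2 * a * c) ^ 2 + (2 * a * d) ^ 2 := by
      have hz : (w : ℤ) = a ^ 2 + b ^ 2 + c ^ 2 + d ^ 2 := by exact_mod_cast heqw
      have hE : (E : ℤ) ^ 2 = ((a : ℤ) ^ 2 - b ^ 2 - c ^ 2 - d ^ 2) ^ 2 :=
        Int.natAbs_sq _
      have : (ℓ : ℤ) = (E : ℤ) ^ 2 + (2 * a * b) ^ 2 + (2 * a * c) ^ 2 + (2 * a * d) ^ 2 := by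
        rw [hE]
        have : ((w : ℤ)) ^ 2 = (ℓ : ℤ) := by exact_mod_cast heq
        rw [← this, hz]; ring
      exact_mod_cast this
    have hac : 0 < 2 * a * c := by positivity
    rcases Nat.eq_zero_or_pos b with hb | hb
    · rcases Nat.eq_zero_or_pos d with hd | hd
      · -- b = d = 0 : then a ≠ c since w is odd, so E > 0
        have hane : a ≠ c := by
          rintro rfl
          rw [hb, hd] at heqw
          obtain ⟨t, ht⟩ := ho
          have : w = 2 * a ^ 2 := by rw [heqw]; ring
          omega
        have hEpos : 0 < E := by
          rw [hEdef]
          refine Int.natAbs_pos.mpr ?_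
          rw [hb, hd]
          push_cast
          intro hcon
          have : (a : ℤ) ^ 2 = (c : ℤ) ^ 2 := by linarith
          have : a ^ 2 = c ^ 2 := by exact_mod_cast this
          exact hane (Nat.pow_left_injective (by norm_num) this)
        exact pair_split ℓ E (2 * a * c) (2 * a * b) (2 * a * d)
          (by rw [hid]; ring) hEpos hac
      · exact pair_split ℓ (2 * a * d) (2 * a * c) E (2 * a * b)
          (by rw [hid]; ring) (by positivity) hac
    · exact pair_split ℓ (2 * a * b) (2 * a * c) E (2 * a * d)
        (by rw [hid]; ring) (by positivity) hac

private lemma key : ∀ ℓ : ℕ, 2 ≤ ℓ →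
    ∃ a b c d : ℕ, ℓ = a ^ 2 + b ^ 2 + c ^ 2 + d ^ 2 ∧
      0 < a ^ 2 + b ^ 2 ∧ 0 < c ^ 2 + d ^ 2 := by
  intro ℓ
  induction ℓ using Nat.strong_induction_on with
  | _ ℓ IH =>
  intro hℓ
  have IH' : ∀ m, m < ℓ → 2 ≤ m →
      ∃ a b c d : ℕ, m = a ^ 2 + b ^ 2 + c ^ 2 + d ^ 2 ∧
        0 < a ^ 2 + b ^ 2 ∧ 0 < c ^ 2 + d ^ 2 := fun m hm h2 => IH m hm h2
  obtain ⟨w, x, y, z, h⟩ := Nat.sum_four_squares ℓ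
  rcases Nat.eq_zero_or_pos w with hw | hw <;>
    rcases Nat.eq_zero_or_pos x with hx | hx <;>
    rcases Nat.eq_zero_or_pos y with hy | hy <;>
    rcases Nat.eq_zero_or_pos z with hz | hz <;>
    first
      | (exact pair_split ℓ w x y z (by subst h; ring) hw hx)
      | (exact pair_split ℓ w y x z (by subst h; ring) hw hy)
      | (exact pair_split ℓ w z x y (by subst h; ring) hw hz)
      | (exact pair_split ℓ x y w z (by subst h; ring) hx hy)
      | (exact pair_split ℓ x z w y (by subst h; ring) hx hz)
      | (exact pair_split ℓ y z w x (by subst h; ring) hy hz)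
      | (exact square_case ℓ w hℓ (by rw [hx, hy, hz] at h; simpa using h) IH')
      | (exact square_case ℓ x hℓ (by rw [hw, hy, hz] at h; simpa using h) IH')
      | (exact square_case ℓ y hℓ (by rw [hw, hx, hz] at h; simpa using h) IH')
      | (exact square_case ℓ z hℓ (by rw [hw, hx, hy] at h; simpa using h) IH')

/-- Lagrange four squares with a nondegeneracy condition: every positive integer `ℓ` is a
sum of four squares `a² + b² + c² + d²`, and if `ℓ > 1` one can choose the representation
so that `ℓ` does not divide `a² + b²`. -/
theorem four_squares_with_nondegeneracy
    (ℓ : ℕ) (hℓ : 0 < ℓ) :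
    ∃ a b c d : ℕ, ℓ = a ^ 2 + b ^ 2 + c ^ 2 + d ^ 2 ∧
      (1 < ℓ → ¬ (ℓ ∣ a ^ 2 + b ^ 2)) := by
  rcases eq_or_lt_of_le (show 1 ≤ ℓ from hℓ) with h1 | h1
  · exact ⟨1, 0, 0, 0, by omega, fun h => by omega⟩
  · obtain ⟨a, b, c, d, heq, hab, hcd⟩ := key ℓ h1
    refine ⟨a, b, c, d, heq, fun _ hdvd => ?_⟩
    have hle : ℓ ≤ a ^ 2 + b ^ 2 := Nat.le_of_dvd hab hdvd
    linarith
end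

section
/- Let ℓ = a² + b² + c² + d² with u := a² + b² invertible mod ℓ, and define α, β, γ, δ ∈ ℤ/ℓℤ by [[α, β], [γ, δ]] = u⁻¹·[[ac − db, ad + bc], [ad + bc, bd − ac]]. Then 1 + α² + γ² ≡ αβ + γδ ≡ 0 and 1 + β² + δ² ≡ 0 in ℤ/ℓℤ. -/
/-- For `ℓ = a² + b² + c² + d²` with `u = a² + b²` invertible mod `ℓ`, the coefficients
`[[α,β],[γ,δ]] = u⁻¹·[[ac − db, ad + bc],[ad + bc, bd − ac]]` satisfy
`1 + α² + γ² ≡ 0`, `αβ + γδ ≡ 0` and `1 + β² + δ² ≡ 0` in `ℤ/ℓℤ`. -/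
theorem quaternion_coefficients_congruences
    (ℓ : ℕ) (a b c d : ℤ) (hℓ : (ℓ : ℤ) = a ^ 2 + b ^ 2 + c ^ 2 + d ^ 2)
    (hu : IsUnit ((a : ZMod ℓ) ^ 2 + (b : ZMod ℓ) ^ 2))
    (α β γ δ : ZMod ℓ)
    (hα : α = ((a : ZMod ℓ) ^ 2 + (b : ZMod ℓ) ^ 2)⁻¹ * ((a : ZMod ℓ) * c - d * b))
    (hβ : β = ((a : ZMod ℓ) ^ 2 + (b : ZMod ℓ) ^ 2)⁻¹ * ((a : ZMod ℓ) * d + b * c))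
    (hγ : γ = ((a : ZMod ℓ) ^ 2 + (b : ZMod ℓ) ^ 2)⁻¹ * ((a : ZMod ℓ) * d + b * c))
    (hδ : δ = ((a : ZMod ℓ) ^ 2 + (b : ZMod ℓ) ^ 2)⁻¹ * ((b : ZMod ℓ) * d - a * c)) :
    1 + α ^ 2 + γ ^ 2 = 0 ∧ α * β + γ * δ = 0 ∧ 1 + β ^ 2 + δ ^ 2 = 0 := by
  have h0 : (a : ZMod ℓ) ^ 2 + b ^ 2 + c ^ 2 + d ^ 2 = 0 := by
    have : ((ℓ : ℤ) : ZMod ℓ) = 0 := by simp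
    rw [hℓ] at this
    push_cast at this
    exact this
  have hv : ((a : ZMod ℓ) ^ 2 + b ^ 2) * ((a : ZMod ℓ) ^ 2 + b ^ 2)⁻¹ = 1 :=
    ZMod.mul_inv_of_unit _ hu
  set u : ZMod ℓ := (a : ZMod ℓ) ^ 2 + b ^ 2
  set v : ZMod ℓ := u⁻¹
  subst hα hβ hγ hδ
  refine ⟨?_, by ring, ?_⟩
  · linear_combination u * v ^ 2 * h0 - (1 + u * v) * hv
  · linear_combination u * v ^ 2 * h0 - (1 + u * v) * hv
end

section
/- Let q be a prime power and H ⊆ ℙ^{N}(𝔽_q) an algebraic hypersurface of degree δ (zero set of a nonzero homogeneous polynomial of degree δ in N+1 variables). Then #H(𝔽_q) ≤ δ·q^{N−1} + Π_{N−2}, where Π_m = (q^{m+1} − 1)/(q − 1) is the number of 𝔽_q-points of ℙ^m. In particular, if δ·q^{N−1} + Π_{N−2} < Π_N then there exists a point of ℙ^N(𝔽_q) not lying on H. -/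
open MvPolynomial


open MvPolynomial Finset

set_option linter.unusedSectionVars false

namespace SerreAux

variable {F : Type*} [Field F] [Fintype F]

lemma geom_sum_nat (q k : ℕ) (hq : 1 ≤ q) :
    (q - 1) * ∑ i ∈ Finset.range k, q ^ i = q ^ k - 1 := by
  have h1 : 1 ≤ q ^ k := Nat.one_le_pow _ _ hq
  zify [hq, h1]
  rw [mul_comm]
  exact geom_sum_mul _ _

lemma eval_smul_of_isHomogeneous {n : ℕ} (f : MvPolynomial (Fin n) F) {d : ℕ}
    (hhom : f.IsHomogeneous d) (c : F) (v : Fin n → F) :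
    eval (c • v) f = c ^ d * eval v f := by
  rw [eval_eq, eval_eq, Finset.mul_sum]
  refine Finset.sum_congr rfl fun μ hμ => ?_
  have hsum : ∑ i ∈ μ.support, μ i = d := by
    have := hhom (mem_support_iff.mp hμ)
    simpa [Finsupp.weight_apply, Finsupp.sum, mul_comm] using this
  calc coeff μ f * ∏ i ∈ μ.support, (c • v) i ^ μ i
      = coeff μ f * ((∏ i ∈ μ.support, c ^ μ i) * ∏ i ∈ μ.support, v i ^ μ i) := by
        rw [← Finset.prod_mul_distrib]
        simp [mul_pow]
    _ = c ^ d * (coeff μ f * ∏ i ∈ μ.support, v i ^ μ i) := by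
        rw [Finset.prod_pow_eq_pow_sum, hsum]; ring

lemma eval_bind₁' {n m : ℕ} (x : Fin m → F) (g : Fin n → MvPolynomial (Fin m) F)
    (φ : MvPolynomial (Fin n) F) :
    eval x (bind₁ g φ) = eval (fun i => eval x (g i)) φ := by
  simp only [eval, eval₂Hom_bind₁]

/-- substitution of a linear change of variables -/
noncomputable def linSub {n m : ℕ} (M : Matrix (Fin n) (Fin m) F) :
    MvPolynomial (Fin n) F → MvPolynomial (Fin m) F :=
  fun f => bind₁ (fun i => ∑ j, MvPolynomial.C (M i j) * X j) f

lemma eval_linSub {n m : ℕ} (M : Matrix (Fin n) (Fin m) F) (f : MvPolynomial (Fin n) F)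
    (w : Fin m → F) : eval w (linSub M f) = eval (M.mulVec w) f := by
  simp only [linSub]
  rw [eval_bind₁']
  have : (fun i => eval w (∑ j, MvPolynomial.C (M i j) * X j)) = M.mulVec w := by
    funext i
    simp [Matrix.mulVec, dotProduct]
  rw [this]

lemma linSub_isHomogeneous {n m : ℕ} (M : Matrix (Fin n) (Fin m) F)
    {f : MvPolynomial (Fin n) F} {d : ℕ} (h : f.IsHomogeneous d) :
    (linSub M f).IsHomogeneous d := by
  have := h.aeval (S := F) (g := fun i => ∑ j, MvPolynomial.C (M i j) * X j) (n := 1) ?_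
  · rw [one_mul] at this
    simpa only [linSub, aeval_eq_bind₁] using this
  · intro i
    exact IsHomogeneous.sum _ _ _ fun j _ => (isHomogeneous_X F j).C_mul _

lemma linSub_linSub {n m k : ℕ} (M : Matrix (Fin m) (Fin k) F)
    (M' : Matrix (Fin n) (Fin m) F) (f : MvPolynomial (Fin n) F) :
    linSub M (linSub M' f) = linSub (M' * M) f := by
  simp only [linSub, bind₁_bind₁]
  have : (fun i => bind₁ (fun i => ∑ j, MvPolynomial.C (M i j) * X j)
      ((fun i => ∑ j, MvPolynomial.C (M' i j) * X j) i))
      = fun i => ∑ j, MvPolynomial.C ((M' * M) i j) * X j := by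
    funext i
    rw [map_sum]
    simp only [map_mul, bind₁_C_right, bind₁_X_right]
    simp_rw [Finset.mul_sum, ← mul_assoc, ← map_mul]
    rw [Finset.sum_comm]
    refine Finset.sum_congr rfl (fun l _ => ?_)
    rw [← Finset.sum_mul, ← map_sum, Matrix.mul_apply]
  rw [this]

lemma linSub_one {n : ℕ} (f : MvPolynomial (Fin n) F) : linSub 1 f = f := by
  have : (fun i : Fin n => ∑ j, MvPolynomial.C ((1 : Matrix (Fin n) (Fin n) F) i j) * X j)
      = fun i => (X i : MvPolynomial (Fin n) F) := by
    funext i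
    simp [Matrix.one_apply, ite_mul, Finset.sum_ite_eq]
  simp only [linSub, this, bind₁_X_left]
  rfl

end SerreAux
namespace SerreAux
open MvPolynomial Finset

variable {F : Type*} [Field F] [Fintype F]

lemma card_zeros_eq {n : ℕ} (p : MvPolynomial (Fin n) F) [DecidableEq F] :
    Nat.card {v : Fin n → F // eval v p = 0}
      = (Finset.univ.filter (fun v : Fin n → F => eval v p = 0)).card := by
  classical
  rw [Nat.card_eq_fintype_card, Fintype.card_subtype]

/-- Schwartz-Zippel / Ore bound, multiplied through by `q` to avoid subtraction. -/
lemma sz : ∀ (n : ℕ) (p : MvPolynomial (Fin n) F), p ≠ 0 →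
    Fintype.card F * Nat.card {v : Fin n → F // eval v p = 0}
      ≤ p.totalDegree * Fintype.card F ^ n := by
  intro n
  induction n with
  | zero =>
    intro p hp
    have : IsEmpty {v : Fin 0 → F // eval v p = 0} := by
      refine ⟨fun ⟨v, hv⟩ => hp ?_⟩
      rw [p.eq_C_of_isEmpty] at hv ⊢
      rw [eval_C] at hv
      rw [hv, map_zero]
    simp [Nat.card_of_isEmpty]
  | succ n ih =>
    intro p hp
    classical
    set q := Fintype.card F with hq
    set P := finSuccEquiv F n p with hP
    have hPne : P ≠ 0 := by
      simpa [hP] using (map_ne_zero_iff _ (finSuccEquiv F n).injective).mpr hp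
    set k := P.natDegree with hk
    set c := P.coeff k with hc
    have hcne : c ≠ 0 := Polynomial.leadingCoeff_ne_zero.mpr hPne
    have hdeg := totalDegree_coeff_finSuccEquiv_add_le p k hcne
    rw [← hP, ← hc] at hdeg
    -- the zero set as a Finset
    set Z : Finset (Fin (n+1) → F) := Finset.univ.filter (fun v => eval v p = 0) with hZ
    have hcard := Finset.card_eq_sum_card_fiberwise (s := Z)
      (t := (Finset.univ : Finset (Fin n → F)))
      (f := fun v : Fin (n+1) → F => Fin.tail v) (fun x _ => Finset.mem_univ _)
    -- bound each fiber
    have hfiber : ∀ s : Fin n → F,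
        (Z.filter (fun v => Fin.tail v = s)).card
          ≤ if eval s c = 0 then q else k := by
      intro s
      by_cases hs : eval s c = 0
      · rw [if_pos hs]
        have : (Z.filter (fun v => Fin.tail v = s)).card ≤ (Finset.univ : Finset F).card := by
          apply Finset.card_le_card_of_injOn (fun v => v 0)
          · intro v _; exact Finset.mem_univ _
          · intro v hv v' hv' h0
            have h0' : v 0 = v' 0 := h0
            simp only [Finset.mem_coe, Finset.mem_filter] at hv hv'
            rw [← Fin.cons_self_tail v, ← Fin.cons_self_tail v', hv.2, hv'.2, h0']
        simpa using this
      · rw [if_neg hs]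
        set φ : Polynomial F := Polynomial.map (eval s) P with hφ
        have hφne : φ ≠ 0 := fun h => hs (by
          have := congrArg (fun r => Polynomial.coeff r k) h
          simpa [hφ, Polynomial.coeff_map] using this)
        have : (Z.filter (fun v => Fin.tail v = s)).card ≤ φ.roots.toFinset.card := by
          apply Finset.card_le_card_of_injOn (fun v => v 0)
          · intro v hv
            simp only [Finset.mem_coe, Finset.mem_filter, hZ, Finset.mem_univ, true_and] at hv
            rw [Finset.mem_coe, Multiset.mem_toFinset, Polynomial.mem_roots hφne]
            have : eval (Fin.cons (v 0) s) p = 0 := by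
              rw [← hv.2, Fin.cons_self_tail, hv.1]
            rwa [eval_eq_eval_mv_eval'] at this
          · intro v hv v' hv' h0
            have h0' : v 0 = v' 0 := h0
            simp only [Finset.mem_coe, Finset.mem_filter] at hv hv'
            rw [← Fin.cons_self_tail v, ← Fin.cons_self_tail v', hv.2, hv'.2, h0']
        refine this.trans ((Multiset.toFinset_card_le _).trans ?_)
        refine (Polynomial.card_roots' φ).trans ?_
        exact Polynomial.natDegree_map_le
    -- sum them up
    have hsum : Z.card ≤ q * (Finset.univ.filter (fun s : Fin n → F => eval s c = 0)).card
        + k * q ^ n := by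
      rw [hcard]
      calc ∑ s : Fin n → F, (Z.filter (fun v => Fin.tail v = s)).card
          ≤ ∑ s : Fin n → F, (if eval s c = 0 then q else k) :=
            Finset.sum_le_sum (fun s _ => hfiber s)
        _ = q * (Finset.univ.filter (fun s : Fin n → F => eval s c = 0)).card
            + k * (Finset.univ.filter (fun s : Fin n → F => ¬ eval s c = 0)).card := by
            rw [Finset.sum_ite, Finset.sum_const, Finset.sum_const]
            simp [mul_comm]
        _ ≤ _ := by
            gcongr
            calc (Finset.univ.filter (fun s : Fin n → F => ¬ eval s c = 0)).card
                ≤ (Finset.univ : Finset (Fin n → F)).card := Finset.card_filter_le _ _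
              _ = q ^ n := by simp [Fintype.card_fun, hq]
    have hZc : q * Nat.card {s : Fin n → F // eval s c = 0} ≤ c.totalDegree * q ^ n := ih c hcne
    rw [card_zeros_eq] at hZc ⊢
    set A := (Finset.univ.filter (fun s : Fin n → F => eval s c = 0)).card with hA
    have step : q * Z.card ≤ (q * A) * q + k * (q ^ n * q) := by
      calc q * Z.card ≤ q * (q * A + k * q ^ n) := Nat.mul_le_mul_left _ hsum
        _ = (q * A) * q + k * (q ^ n * q) := by ring
    have step2 : (q * A) * q + k * (q ^ n * q) ≤ (c.totalDegree * q ^ n) * q + k * (q ^ n * q) :=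
      Nat.add_le_add_right (Nat.mul_le_mul hZc (le_refl q)) _
    refine step.trans (step2.trans ?_)
    have heq : (c.totalDegree * q ^ n) * q + k * (q ^ n * q) = (c.totalDegree + k) * q ^ (n+1) := by
      ring
    rw [heq]
    exact Nat.mul_le_mul_right _ (by omega)

end SerreAux
namespace SerreAux
open MvPolynomial Finset

variable {F : Type*} [Field F] [Fintype F]

lemma card_zeros_one_var {d : ℕ} (f : MvPolynomial (Fin 1) F) (hf : f ≠ 0) (hd : 0 < d)
    (hhom : f.IsHomogeneous d) : Nat.card {v : Fin 1 → F // eval v f = 0} = 1 := by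
  classical
  have hsupp : f.support ⊆ {Finsupp.single (0 : Fin 1) d} := by
    intro μ hμ
    have hw := hhom (mem_support_iff.mp hμ)
    have hμ0 : (Finsupp.weight (1 : Fin 1 → ℕ)) μ = μ 0 := by
      rw [Finsupp.weight_apply, Finsupp.sum_fintype]
      · simp
      · simp
    rw [Finset.mem_singleton]
    refine Finsupp.ext fun i => ?_
    rw [Subsingleton.elim i 0, Finsupp.single_eq_same, ← hμ0]
    exact hw
  have hrepr : f = monomial (Finsupp.single (0 : Fin 1) d)
      (coeff (Finsupp.single (0 : Fin 1) d) f) := by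
    conv_lhs => rw [← support_sum_monomial_coeff f]
    rw [Finset.sum_subset hsupp]
    · rw [Finset.sum_singleton]
    · intro μ _ hμ
      rw [notMem_support_iff.mp hμ, map_zero]
  set c := coeff (Finsupp.single (0 : Fin 1) d) f with hcdef
  have hcne : c ≠ 0 := by
    intro h
    apply hf
    rw [hrepr, h, map_zero]
  have heval : ∀ v : Fin 1 → F, eval v f = c * v 0 ^ d := by
    intro v
    conv_lhs => rw [hrepr]
    rw [eval_monomial]
    congr 1
    exact Finsupp.prod_single_index (pow_zero _)
  have hiff : ∀ v : Fin 1 → F, eval v f = 0 ↔ v = 0 := by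
    intro v
    rw [heval]
    constructor
    · intro h
      have : v 0 = 0 := by
        rcases mul_eq_zero.mp h with h' | h'
        · exact absurd h' hcne
        · exact pow_eq_zero_iff (by omega) |>.mp h'
      funext i
      rw [Subsingleton.elim i 0, this]; rfl
    · rintro rfl
      simp [zero_pow (by omega : d ≠ 0)]
  rw [Nat.card_congr (Equiv.subtypeEquivRight hiff)]
  haveI : Unique {v : Fin 1 → F // v = 0} :=
    ⟨⟨⟨0, rfl⟩⟩, fun ⟨v, hv⟩ => Subtype.ext hv⟩
  exact Nat.card_unique

lemma slice_bound {n d : ℕ} (f' : MvPolynomial (Fin (n+1)) F) (hf' : f' ≠ 0)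
    (hhom : f'.IsHomogeneous d) (hd : 0 < d) (hdq : d ≤ Fintype.card F)
    (hvan : ∀ v : Fin (n+1) → F, v 0 = 0 → eval v f' = 0) :
    Fintype.card F * Nat.card {v : Fin (n+1) → F // eval v f' = 0 ∧ v 0 = 1}
      ≤ (d - 1) * Fintype.card F ^ n := by
  classical
  set q := Fintype.card F with hq
  set P := finSuccEquiv F n f' with hP
  have hPne : P ≠ 0 := by
    simpa [hP] using (map_ne_zero_iff _ (finSuccEquiv F n).injective).mpr hf'
  have hndle : P.natDegree ≤ d := by
    rw [hP, natDegree_finSuccEquiv]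
    exact (degreeOf_le_totalDegree f' 0).trans hhom.totalDegree_le
  -- the coefficient of X_0^0 vanishes
  have h00 : ∀ w : Fin n → F, eval w (P.coeff 0) = 0 := by
    intro w
    have hv := hvan (Fin.cons 0 w) (by simp)
    rw [eval_eq_eval_mv_eval'] at hv
    rw [← Polynomial.coeff_zero_eq_eval_zero, Polynomial.coeff_map] at hv
    exact hv
  have h0 : P.coeff 0 = 0 :=
    (hhom.finSuccEquiv_coeff_isHomogeneous 0 d (zero_add d)).eq_zero_of_forall_eval_eq_zero_of_le_card
      h00 (by rw [Cardinal.mk_fintype]; exact_mod_cast hdq)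
  set p : MvPolynomial (Fin n) F := ∑ k ∈ Finset.range (P.natDegree + 1), P.coeff k with hpdef
  have hev : ∀ w : Fin n → F, eval w p = eval (Fin.cons 1 w) f' := by
    intro w
    rw [eval_eq_eval_mv_eval']
    rw [Polynomial.eval_eq_sum_range' (lt_of_le_of_lt Polynomial.natDegree_map_le
      (Nat.lt_succ_self P.natDegree))]
    simp only [one_pow, mul_one, Polynomial.coeff_map]
    rw [hpdef, map_sum]
  have hpne : p ≠ 0 := by
    intro hp0
    have hcomp := congrArg (homogeneousComponent (d - P.natDegree)) hp0
    rw [map_sum, map_zero] at hcomp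
    rw [Finset.sum_eq_single P.natDegree] at hcomp
    · rw [homogeneousComponent_of_mem ((mem_homogeneousSubmodule _ _).mpr
        (hhom.finSuccEquiv_coeff_isHomogeneous P.natDegree (d - P.natDegree) (by omega)))] at hcomp
      rw [if_pos rfl] at hcomp
      exact Polynomial.leadingCoeff_ne_zero.mpr hPne hcomp
    · intro k hk hkne
      rw [Finset.mem_range] at hk
      rcases eq_or_ne (P.coeff k) 0 with h | h
      · rw [h, map_zero]
      · rw [homogeneousComponent_of_mem ((mem_homogeneousSubmodule _ _).mpr
          (hhom.finSuccEquiv_coeff_isHomogeneous k (d - k) (by omega))), if_neg (by omega)]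
    · intro h
      exact absurd (Finset.self_mem_range_succ P.natDegree) h
  have hdegp : p.totalDegree ≤ d - 1 := by
    refine (totalDegree_finset_sum _ _).trans (Finset.sup_le ?_)
    intro k hk
    rcases eq_or_ne (P.coeff k) 0 with h | h
    · simp [h]
    · have hk1 : 1 ≤ k := by
        rcases Nat.eq_zero_or_pos k with rfl | h'
        · exact absurd h0 h
        · exact h'
      have hkd : k ≤ d := by rw [Finset.mem_range] at hk; omega
      refine (hhom.finSuccEquiv_coeff_isHomogeneous k (d - k) (by omega)).totalDegree_le.trans ?_
      omega
  -- the slice is in bijection with zeros of p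
  have e : {v : Fin (n+1) → F // eval v f' = 0 ∧ v 0 = 1} ≃ {w : Fin n → F // eval w p = 0} := by
    refine ⟨fun v => ⟨Fin.tail v.1, ?_⟩, fun w => ⟨Fin.cons 1 w.1, ?_, by simp⟩, ?_, ?_⟩
    · have hcons := Fin.cons_self_tail v.1
      rw [v.2.2] at hcons
      rw [hev, hcons]
      exact v.2.1
    · rw [← hev]
      exact w.2
    · rintro ⟨v, hv⟩
      apply Subtype.ext
      simp only
      rw [← hv.2, Fin.cons_self_tail]
    · rintro ⟨w, hw⟩
      apply Subtype.ext
      simp only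
      rw [Fin.tail_cons]
  rw [Nat.card_congr e]
  refine (sz n p hpne).trans ?_
  exact Nat.mul_le_mul_right _ hdegp

end SerreAux
namespace SerreAux
open MvPolynomial Finset LinearMap

variable {F : Type*} [Field F] [Fintype F]

/-- the linear functional given by a coefficient vector -/
noncomputable def dotL {m : ℕ} (a : Fin m → F) : (Fin m → F) →ₗ[F] F :=
  ∑ i, a i • LinearMap.proj i

lemma dotL_apply {m : ℕ} (a v : Fin m → F) : dotL a v = ∑ i, a i * v i := by
  simp [dotL]

lemma dotL_comm {m : ℕ} (a v : Fin m → F) : dotL a v = dotL v a := by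
  simp [dotL_apply, mul_comm]

lemma exists_index_ne {m : ℕ} {a : Fin m → F} (ha : a ≠ 0) : ∃ i, a i ≠ 0 := by
  by_contra h
  push_neg at h
  exact ha (funext fun i => h i)

lemma dotL_surjective {m : ℕ} {a : Fin m → F} (ha : a ≠ 0) :
    Function.Surjective (dotL a) := by
  obtain ⟨i0, hi0⟩ := exists_index_ne ha
  intro c
  refine ⟨Pi.single i0 ((a i0)⁻¹ * c), ?_⟩
  rw [dotL_apply, Finset.sum_eq_single i0]
  · rw [Pi.single_eq_same, ← mul_assoc, mul_inv_cancel₀ hi0, one_mul]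
  · intro j _ hj
    rw [Pi.single_eq_of_ne hj, mul_zero]
  · intro h
    exact absurd (Finset.mem_univ _) h

lemma finrank_ker_dotL {m : ℕ} {a : Fin (m+1) → F} (ha : a ≠ 0) :
    Module.finrank F (LinearMap.ker (dotL a)) = m := by
  have h := LinearMap.finrank_range_add_finrank_ker (dotL a)
  rw [LinearMap.range_eq_top.mpr (dotL_surjective ha), finrank_top, Module.finrank_self,
    Module.finrank_fin_fun] at h
  omega

lemma card_ker_dotL {m : ℕ} {a : Fin (m+1) → F} (ha : a ≠ 0) :
    Nat.card {v : Fin (m+1) → F // dotL a v = 0} = Fintype.card F ^ m := by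
  classical
  have e : {v : Fin (m+1) → F // dotL a v = 0} ≃ LinearMap.ker (dotL a) :=
    Equiv.subtypeEquivRight fun v => (LinearMap.mem_ker).symm
  rw [Nat.card_congr e, Nat.card_eq_fintype_card, Module.card_eq_pow_finrank (K := F),
    finrank_ker_dotL ha]

lemma exists_iota {m : ℕ} {a : Fin (m+1) → F} (ha : a ≠ 0) :
    ∃ ι : (Fin m → F) →ₗ[F] (Fin (m+1) → F), Function.Injective ι ∧
      (∀ w, dotL a (ι w) = 0) ∧ (∀ v, dotL a v = 0 → ∃ w, ι w = v) := by
  classical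
  have hrank : Module.finrank F (Fin m → F) = Module.finrank F (LinearMap.ker (dotL a)) := by
    rw [Module.finrank_fin_fun, finrank_ker_dotL ha]
  obtain ⟨e⟩ := FiniteDimensional.nonempty_linearEquiv_of_finrank_eq hrank
  refine ⟨(LinearMap.ker (dotL a)).subtype ∘ₗ e.toLinearMap, ?_, ?_, ?_⟩
  · exact (Submodule.injective_subtype _).comp e.injective
  · intro w
    exact LinearMap.mem_ker.mp (e w).2
  · intro v hv
    refine ⟨e.symm ⟨v, LinearMap.mem_ker.mpr hv⟩, ?_⟩
    simp
lemma exists_phi {m : ℕ} {a : Fin (m+1) → F} (ha : a ≠ 0) :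
    ∃ φ : (Fin (m+1) → F) →ₗ[F] (Fin (m+1) → F), Function.Bijective φ ∧
      ∀ w, dotL a (φ w) = w 0 := by
  classical
  obtain ⟨i0, hi0⟩ := exists_index_ne ha
  set u : Fin (m+1) → F := Pi.single i0 (a i0)⁻¹ with hu
  have hau : dotL a u = 1 := by
    rw [dotL_apply, Finset.sum_eq_single i0]
    · rw [hu, Pi.single_eq_same, mul_inv_cancel₀ hi0]
    · intro j _ hj
      rw [hu, Pi.single_eq_of_ne hj, mul_zero]
    · intro h
      exact absurd (Finset.mem_univ _) h
  obtain ⟨ι, hinj, hker, _⟩ := exists_iota ha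
  set φ : (Fin (m+1) → F) →ₗ[F] (Fin (m+1) → F) :=
    (LinearMap.proj 0).smulRight u + ι ∘ₗ LinearMap.funLeft F F Fin.succ with hφ
  have hval : ∀ w, dotL a (φ w) = w 0 := by
    intro w
    rw [hφ]
    simp only [LinearMap.add_apply, LinearMap.smulRight_apply, LinearMap.proj_apply,
      LinearMap.coe_comp, Function.comp_apply, map_add]
    rw [map_smul, hau, hker]
    simp
  have hinj' : Function.Injective φ := by
    intro w w' hww
    have h0 : w 0 = w' 0 := by rw [← hval w, ← hval w', hww]
    have h1 : ι (LinearMap.funLeft F F Fin.succ w) = ι (LinearMap.funLeft F F Fin.succ w') := by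
      have := hww
      rw [hφ] at this
      simp only [LinearMap.add_apply, LinearMap.smulRight_apply, LinearMap.proj_apply,
        LinearMap.coe_comp, Function.comp_apply] at this
      rw [h0] at this
      exact add_left_cancel this
    have h2 := hinj h1
    funext i
    refine Fin.cases ?_ ?_ i
    · exact h0
    · intro j
      have := congrFun h2 j
      simpa [LinearMap.funLeft_apply] using this
  exact ⟨φ, ⟨hinj', LinearMap.injective_iff_surjective.mp hinj'⟩, hval⟩

end SerreAux
namespace SerreAux
open MvPolynomial Finset

variable {F : Type*} [Field F] [Fintype F]

lemma arith1 (q d m : ℕ) (hq : 2 ≤ q) (hd : 1 ≤ d) :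
    q * q^(m+1) + (q-1) * ((d-1) * q^(m+1)) = q^(m+1) * ((q-1)*d + 1) := by
  obtain ⟨Q, rfl⟩ : ∃ Q, q = Q + 2 := ⟨q-2, by omega⟩
  obtain ⟨D, rfl⟩ : ∃ D, d = D + 1 := ⟨d-1, by omega⟩
  have e1 : Q + 2 - 1 = Q + 1 := by omega
  have e2 : D + 1 - 1 = D := by omega
  rw [e1, e2]
  ring

lemma eval_zero_of_homog {k d : ℕ} {f : MvPolynomial (Fin k) F} (hd : 0 < d)
    (hhom : f.IsHomogeneous d) : eval (0 : Fin k → F) f = 0 := by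
  have h := eval_smul_of_isHomogeneous f hhom 0 0
  rw [smul_zero] at h
  rw [h, zero_pow (by omega : d ≠ 0), zero_mul]

set_option maxHeartbeats 2000000 in
/-- Case A of the induction step: the zero set contains a hyperplane. -/
lemma caseA {m d : ℕ} (f : MvPolynomial (Fin (m+2)) F) (hd : 0 < d)
    (hf : f ≠ 0) (hhom : f.IsHomogeneous d) (hdq : d ≤ Fintype.card F)
    {a : Fin (m+2) → F} (ha : a ≠ 0) (hvan : ∀ v, dotL a v = 0 → eval v f = 0) :
    Fintype.card F * Nat.card {v : Fin (m+2) → F // eval v f = 0}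
      ≤ Fintype.card F ^ (m+1) * ((Fintype.card F - 1) * d + 1) := by
  classical
  set q := Fintype.card F with hqdef
  have hq2 : 2 ≤ q := Fintype.one_lt_card
  obtain ⟨φ, hbij, hval⟩ := exists_phi ha
  set M := LinearMap.toMatrix' φ with hM
  set f' := linSub M f with hf'
  have hMv : ∀ w, M.mulVec w = φ w := by
    intro w
    rw [hM, ← Matrix.toLin'_apply, Matrix.toLin'_toMatrix']
  have hev : ∀ w, eval w f' = eval (φ w) f := by
    intro w
    rw [hf', eval_linSub, hMv]
  have hf'hom : f'.IsHomogeneous d := linSub_isHomogeneous M hhom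
  have hf'ne : f' ≠ 0 := by
    intro h0
    set ψ := LinearMap.toMatrix' (((LinearEquiv.ofBijective φ hbij).symm :
      (Fin (m+2) → F) ≃ₗ[F] (Fin (m+2) → F)) : (Fin (m+2) → F) →ₗ[F] (Fin (m+2) → F)) with hψ
    have hcomp : φ ∘ₗ (((LinearEquiv.ofBijective φ hbij).symm :
        (Fin (m+2) → F) ≃ₗ[F] (Fin (m+2) → F)) : (Fin (m+2) → F) →ₗ[F] (Fin (m+2) → F))
        = LinearMap.id := by
      apply LinearMap.ext
      intro x
      have h1 := (LinearEquiv.ofBijective φ hbij).apply_symm_apply x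
      simpa [LinearEquiv.ofBijective_apply] using h1
    have hMψ : M * ψ = 1 := by
      rw [hM, hψ, ← LinearMap.toMatrix'_comp, hcomp, LinearMap.toMatrix'_id]
    have hback : linSub ψ f' = f := by
      rw [hf', linSub_linSub, hMψ, linSub_one]
    rw [h0] at hback
    apply hf
    rw [← hback]
    simp [linSub, map_zero]
  have hvan' : ∀ w : Fin (m+2) → F, w 0 = 0 → eval w f' = 0 := by
    intro w h0
    rw [hev]
    exact hvan _ (by rw [hval, h0])
  have hcount : Nat.card {v : Fin (m+2) → F // eval v f = 0}
      = Nat.card {w : Fin (m+2) → F // eval w f' = 0} := by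
    apply Nat.card_congr
    refine Equiv.symm (Equiv.ofBijective (fun w => ⟨φ w.1, by rw [← hev]; exact w.2⟩) ⟨?_, ?_⟩)
    · rintro ⟨w, hw⟩ ⟨w', hw'⟩ h
      have hφw : φ w = φ w' := congrArg Subtype.val h
      exact Subtype.ext (hbij.1 hφw)
    · rintro ⟨v, hv⟩
      obtain ⟨w, rfl⟩ := hbij.2 v
      exact ⟨⟨w, by rw [hev]; exact hv⟩, rfl⟩
  rw [hcount]
  set Z' : Finset (Fin (m+2) → F) := univ.filter (fun v => eval v f' = 0) with hZ'
  have hNZ : Nat.card {w : Fin (m+2) → F // eval w f' = 0} = Z'.card := by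
    rw [Nat.card_eq_fintype_card, Fintype.card_subtype]
  rw [hNZ]
  have hfib := Finset.card_eq_sum_card_fiberwise (s := Z') (t := (univ : Finset F))
    (f := fun v => v 0) (fun x _ => mem_univ _)
  set t := (Z'.filter (fun v => v 0 = 1)).card with ht
  have hslice : ∀ c : F, c ≠ 0 → (Z'.filter (fun v => v 0 = c)).card = t := by
    intro c hc
    rw [ht]
    refine Finset.card_bij' (fun v _ => c⁻¹ • v) (fun v _ => c • v) ?_ ?_ ?_ ?_
    · intro v hv
      simp only [hZ', Finset.mem_filter, Finset.mem_univ, true_and] at hv ⊢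
      refine ⟨?_, ?_⟩
      · rw [eval_smul_of_isHomogeneous f' hf'hom, hv.1, mul_zero]
      · show c⁻¹ * v 0 = 1
        rw [hv.2, inv_mul_cancel₀ hc]
    · intro v hv
      simp only [hZ', Finset.mem_filter, Finset.mem_univ, true_and] at hv ⊢
      refine ⟨?_, ?_⟩
      · rw [eval_smul_of_isHomogeneous f' hf'hom, hv.1, mul_zero]
      · show c * v 0 = c
        rw [hv.2, mul_one]
    · intro v _
      show c • (c⁻¹ • v) = v
      rw [smul_smul, mul_inv_cancel₀ hc, one_smul]
    · intro v _
      show c⁻¹ • (c • v) = v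
      rw [smul_smul, inv_mul_cancel₀ hc, one_smul]
  have hfib0 : (Z'.filter (fun v => v 0 = 0)).card ≤ q ^ (m+1) := by
    have hle : (Z'.filter (fun v => v 0 = 0)).card ≤ (univ : Finset (Fin (m+1) → F)).card := by
      apply Finset.card_le_card_of_injOn (fun v => Fin.tail v)
      · intro v _; exact mem_univ _
      · intro v hv v' hv' hh
        have hh' : Fin.tail v = Fin.tail v' := hh
        simp only [Finset.mem_coe, Finset.mem_filter] at hv hv'
        rw [← Fin.cons_self_tail v, ← Fin.cons_self_tail v', hv.2, hv'.2, hh']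
    simpa [Fintype.card_fun] using hle
  have hsplit : Z'.card = (Z'.filter (fun v => v 0 = 0)).card + (q - 1) * t := by
    rw [hfib, ← Finset.add_sum_erase _ _ (mem_univ (0 : F))]
    congr 1
    rw [Finset.sum_congr rfl (fun c hc => hslice c (Finset.ne_of_mem_erase hc)),
      Finset.sum_const, smul_eq_mul, Finset.card_erase_of_mem (mem_univ _), Finset.card_univ]
  have hqt : q * t ≤ (d - 1) * q ^ (m+1) := by
    have htt : t = Nat.card {v : Fin (m+2) → F // eval v f' = 0 ∧ v 0 = 1} := by
      rw [Nat.card_eq_fintype_card, Fintype.card_subtype, ht, hZ', Finset.filter_filter]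
    rw [htt]
    exact slice_bound f' hf'ne hf'hom hd hdq hvan'
  calc q * Z'.card = q * (Z'.filter (fun v => v 0 = 0)).card + (q-1) * (q * t) := by
        rw [hsplit]; ring
    _ ≤ q * q^(m+1) + (q-1) * ((d-1) * q^(m+1)) := by
        gcongr
    _ = q^(m+1) * ((q-1)*d + 1) := arith1 q d m hq2 hd

end SerreAux
namespace SerreAux
open MvPolynomial Finset

variable {F : Type*} [Field F] [Fintype F]

lemma arith2 (q D e : ℕ) (hq : 2 ≤ q) (hD : q ≤ D) (hD2 : D ≤ q^2) (he : 1 ≤ e) :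
    (q^2*e - 1) * (e*D - q) ≤ (q*e - 1) * (q*(e*D) - q) := by
  have h1 : 1 ≤ q^2*e := Nat.one_le_iff_ne_zero.mpr (by positivity)
  have h2 : q ≤ e*D := le_trans hD (by nlinarith)
  have h3 : 1 ≤ q*e := Nat.one_le_iff_ne_zero.mpr (by positivity)
  have h4 : q ≤ q*(e*D) := by nlinarith
  zify [h1, h2, h3, h4]
  have key : 0 ≤ (e:ℤ) * ((q:ℤ)-1) * ((q:ℤ)^2 - (D:ℤ)) := by
    have c1 : (0:ℤ) ≤ e := by positivity
    have c2 : (0:ℤ) ≤ (q:ℤ) - 1 := by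
      have : (1:ℤ) ≤ q := by exact_mod_cast (by omega : 1 ≤ q)
      omega
    have c3 : (0:ℤ) ≤ (q:ℤ)^2 - D := by
      have : (D:ℤ) ≤ (q:ℤ)^2 := by exact_mod_cast hD2
      omega
    positivity
  nlinarith [key]

theorem main_bound (m : ℕ) : ∀ {d : ℕ} (f : MvPolynomial (Fin (m+1)) F), 0 < d → f ≠ 0 →
    f.IsHomogeneous d →
    Fintype.card F * Nat.card {v : Fin (m+1) → F // eval v f = 0}
      ≤ Fintype.card F ^ m * ((Fintype.card F - 1) * d + 1) := by
  induction m with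
  | zero =>
    intro d f hd hf hhom
    rw [card_zeros_one_var f hf hd hhom]
    have hq1 : 1 ≤ Fintype.card F := Fintype.card_pos
    have hle : Fintype.card F - 1 ≤ (Fintype.card F - 1) * d := Nat.le_mul_of_pos_right _ hd
    simp only [pow_zero, one_mul, mul_one]
    omega
  | succ m ih =>
    intro d f hd hf hhom
    classical
    set q := Fintype.card F with hqdef
    have hq2 : 2 ≤ q := Fintype.one_lt_card
    by_cases hdq : d ≤ q
    case neg =>
      have hcard : Nat.card {v : Fin (m+2) → F // eval v f = 0} ≤ q^(m+2) := by
        have hinj := Nat.card_le_card_of_injective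
          (fun v : {v : Fin (m+2) → F // eval v f = 0} => v.1) Subtype.val_injective
        have hcf : Nat.card (Fin (m+2) → F) = q^(m+2) := by
          rw [Nat.card_eq_fintype_card, Fintype.card_fun, Fintype.card_fin]
        rw [hcf] at hinj
        exact hinj
      calc q * Nat.card {v : Fin (m+2) → F // eval v f = 0} ≤ q * q^(m+2) :=
            Nat.mul_le_mul_left _ hcard
        _ ≤ q^(m+1) * ((q-1)*d + 1) := by
            have hrw : q * q^(m+2) = q^(m+1) * q^2 := by ring
            rw [hrw]
            apply Nat.mul_le_mul_left
            have h1 : q + 1 ≤ d := by omega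
            have h2 : (q-1)*(q+1) ≤ (q-1)*d := Nat.mul_le_mul_left _ h1
            have h3 : (q-1)*(q+1) + 1 = q^2 := by
              obtain ⟨Q, hQ⟩ : ∃ Q, q = Q + 2 := ⟨q-2, by omega⟩
              rw [hQ]
              have e1 : Q + 2 - 1 = Q + 1 := by omega
              rw [e1]; ring
            omega
    case pos =>
      by_cases hA : ∃ a : Fin (m+2) → F, a ≠ 0 ∧ ∀ v, dotL a v = 0 → eval v f = 0
      · obtain ⟨a, ha, hvan⟩ := hA
        exact caseA f hd hf hhom hdq ha hvan
      push_neg at hA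
      set D := (q - 1) * d + 1 with hD
      have hDq : q ≤ D := by
        have : q - 1 ≤ (q-1) * d := Nat.le_mul_of_pos_right _ hd
        omega
      have hDq2 : D ≤ q^2 := by
        have h2 : (q-1)*d ≤ (q-1)*q := Nat.mul_le_mul_left _ hdq
        have h3 : (q-1)*q + 1 ≤ q^2 := by
          obtain ⟨Q, hQ⟩ : ∃ Q, q = Q + 2 := ⟨q-2, by omega⟩
          rw [hQ]
          have e1 : Q + 2 - 1 = Q + 1 := by omega
          rw [e1]; nlinarith
        omega
      -- restriction to hyperplanes
      have hrestr : ∀ a : Fin (m+2) → F, a ≠ 0 →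
          q * Nat.card {v : Fin (m+2) → F // eval v f = 0 ∧ dotL a v = 0} ≤ q^m * D := by
        intro a ha
        obtain ⟨ι, hinj, hker, hsurj⟩ := exists_iota ha
        set Mi := LinearMap.toMatrix' ι with hMi
        set g := linSub Mi f with hg
        have hMiv : ∀ w, Mi.mulVec w = ι w := by
          intro w; rw [hMi, ← Matrix.toLin'_apply, Matrix.toLin'_toMatrix']
        have heg : ∀ w, eval w g = eval (ι w) f := by
          intro w; rw [hg, eval_linSub, hMiv]
        have hghom : g.IsHomogeneous d := linSub_isHomogeneous _ hhom
        have hgne : g ≠ 0 := by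
          obtain ⟨v, hva, hvne⟩ := hA a ha
          obtain ⟨w, hw⟩ := hsurj v hva
          intro h0
          apply hvne
          rw [← hw, ← heg, h0, map_zero]
        have hcardeq : Nat.card {v : Fin (m+2) → F // eval v f = 0 ∧ dotL a v = 0}
            = Nat.card {w : Fin (m+1) → F // eval w g = 0} := by
          apply Nat.card_congr
          refine Equiv.symm (Equiv.ofBijective
            (fun w => ⟨ι w.1, by rw [← heg]; exact w.2, hker w.1⟩) ⟨?_, ?_⟩)
          · rintro ⟨w, hw⟩ ⟨w', hw'⟩ h
            exact Subtype.ext (hinj (congrArg Subtype.val h))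
          · rintro ⟨v, hv⟩
            obtain ⟨w, hw⟩ := hsurj v hv.2
            refine ⟨⟨w, ?_⟩, Subtype.ext hw⟩
            rw [heg, hw]; exact hv.1
        rw [hcardeq]
        exact ih g hd hgne hghom
      -- double counting
      set T : Finset (Fin (m+2) → F) := univ.filter (fun v => v ≠ 0 ∧ eval v f = 0) with hT
      set pairs : Finset ((Fin (m+2) → F) × (Fin (m+2) → F)) :=
        univ.filter (fun x => x.1 ≠ 0 ∧ eval x.1 f = 0 ∧ x.2 ≠ 0 ∧ dotL x.2 x.1 = 0) with hpairs
      have hcount1 : pairs.card = T.card * (q^(m+1) - 1) := by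
        rw [Finset.card_eq_sum_card_fiberwise (s := pairs) (t := T) (f := Prod.fst)
          (fun x hx => by
            simp only [Finset.mem_coe, hpairs, Finset.mem_filter, Finset.mem_univ, true_and] at hx
            simp only [Finset.mem_coe, hT, Finset.mem_filter, Finset.mem_univ, true_and]
            exact ⟨hx.1, hx.2.1⟩)]
        have hfibv : ∀ v ∈ T, (pairs.filter (fun x => x.1 = v)).card = q^(m+1) - 1 := by
          intro v hv
          simp only [hT, Finset.mem_filter, Finset.mem_univ, true_and] at hv
          have hvne : v ≠ 0 := hv.1
          have hveval : eval v f = 0 := hv.2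
          have hbijcard : (pairs.filter (fun x => x.1 = v)).card
              = ((univ.filter (fun a : Fin (m+2) → F => dotL a v = 0)).erase 0).card := by
            refine Finset.card_bij' (fun x _ => x.2) (fun a _ => (v, a)) ?_ ?_ ?_ ?_
            · rintro ⟨x1, x2⟩ hx
              simp only [hpairs, Finset.mem_filter, Finset.mem_univ, true_and] at hx
              rw [Finset.mem_erase]
              refine ⟨hx.1.2.2.1, ?_⟩
              simp only [Finset.mem_filter, Finset.mem_univ, true_and]
              rw [← hx.2]
              exact hx.1.2.2.2
            · intro b hb
              rw [Finset.mem_erase] at hb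
              simp only [Finset.mem_filter, Finset.mem_univ, true_and] at hb
              simp only [hpairs, Finset.mem_filter, Finset.mem_univ, true_and]
              exact ⟨⟨hvne, hveval, hb.1, hb.2⟩, by trivial⟩
            · rintro ⟨x1, x2⟩ hx
              simp only [hpairs, Finset.mem_filter, Finset.mem_univ, true_and] at hx
              simp only
              rw [← hx.2]
            · intro b _
              rfl
          rw [hbijcard, Finset.card_erase_of_mem (by
            simp only [Finset.mem_filter, Finset.mem_univ, true_and]
            simp [dotL_apply])]
          congr 1
          have h1 : (univ.filter (fun a : Fin (m+2) → F => dotL a v = 0))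
              = (univ.filter (fun a : Fin (m+2) → F => dotL v a = 0)) := by
            apply Finset.filter_congr
            intro b _
            rw [dotL_comm]
          rw [h1, ← Fintype.card_subtype, ← Nat.card_eq_fintype_card]
          exact card_ker_dotL hvne
        rw [Finset.sum_congr rfl hfibv, Finset.sum_const, smul_eq_mul]
      have hcount2 : q * pairs.card ≤ (q^(m+2) - 1) * (q^m * D - q) := by
        rw [Finset.card_eq_sum_card_fiberwise (s := pairs)
          (t := univ.filter (fun a : Fin (m+2) → F => a ≠ 0)) (f := Prod.snd)
          (fun x hx => by
            simp only [Finset.mem_coe, hpairs, Finset.mem_filter, Finset.mem_univ, true_and] at hx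
            simp only [Finset.mem_coe, Finset.mem_filter, Finset.mem_univ, true_and]
            exact hx.2.2.1)]
        rw [Finset.mul_sum]
        have hfiba : ∀ b ∈ univ.filter (fun a : Fin (m+2) → F => a ≠ 0),
            q * (pairs.filter (fun x => x.2 = b)).card ≤ q^m * D - q := by
          intro b hb
          simp only [Finset.mem_filter, Finset.mem_univ, true_and] at hb
          set Kb : Finset (Fin (m+2) → F) :=
            univ.filter (fun v => eval v f = 0 ∧ dotL b v = 0) with hKb
          have hbijcard : (pairs.filter (fun x => x.2 = b)).card = (Kb.erase 0).card := by
            refine Finset.card_bij' (fun x _ => x.1) (fun v _ => (v, b)) ?_ ?_ ?_ ?_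
            · rintro ⟨x1, x2⟩ hx
              simp only [hpairs, Finset.mem_filter, Finset.mem_univ, true_and] at hx
              rw [Finset.mem_erase]
              refine ⟨hx.1.1, ?_⟩
              simp only [hKb, Finset.mem_filter, Finset.mem_univ, true_and]
              refine ⟨hx.1.2.1, ?_⟩
              rw [← hx.2]
              exact hx.1.2.2.2
            · intro v hv
              rw [Finset.mem_erase] at hv
              simp only [hKb, Finset.mem_filter, Finset.mem_univ, true_and] at hv
              simp only [hpairs, Finset.mem_filter, Finset.mem_univ, true_and]
              exact ⟨⟨hv.1, hv.2.1, hb, hv.2.2⟩, by trivial⟩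
            · rintro ⟨x1, x2⟩ hx
              simp only [hpairs, Finset.mem_filter, Finset.mem_univ, true_and] at hx
              simp only
              rw [← hx.2]
            · intro v _
              rfl
          have h0mem : (0 : Fin (m+2) → F) ∈ Kb := by
            simp only [hKb, Finset.mem_filter, Finset.mem_univ, true_and]
            exact ⟨eval_zero_of_homog hd hhom, map_zero _⟩
          have hKbcard : q * Kb.card ≤ q^m * D := by
            have : Kb.card = Nat.card {v : Fin (m+2) → F // eval v f = 0 ∧ dotL b v = 0} := by
              rw [Nat.card_eq_fintype_card, Fintype.card_subtype]
            rw [this]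
            exact hrestr b hb
          rw [hbijcard, Finset.card_erase_of_mem h0mem, Nat.mul_sub, mul_one]
          exact Nat.sub_le_sub_right hKbcard q
        calc ∑ b ∈ univ.filter (fun a : Fin (m+2) → F => a ≠ 0),
              q * (pairs.filter (fun x => x.2 = b)).card
            ≤ ∑ b ∈ univ.filter (fun a : Fin (m+2) → F => a ≠ 0), (q^m * D - q) :=
              Finset.sum_le_sum hfiba
          _ = (q^(m+2) - 1) * (q^m * D - q) := by
              rw [Finset.sum_const, smul_eq_mul]
              congr 1
              rw [Finset.filter_ne', Finset.card_erase_of_mem (Finset.mem_univ _),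
                Finset.card_univ, Fintype.card_fun, Fintype.card_fin]
      -- combine the two counts
      have harith : (q^(m+2) - 1) * (q^m * D - q) ≤ (q^(m+1) - 1) * (q^(m+1) * D - q) := by
        have h1 : q^(m+2) = q^2 * q^m := by ring
        have h2 : q^(m+1) = q * q^m := by ring
        have h3 : q^(m+1) * D = q * (q^m * D) := by ring
        rw [h1, h3, h2]
        exact arith2 q D (q^m) hq2 hDq hDq2 (Nat.one_le_pow _ _ (by omega))
      have hTq : q * T.card ≤ q^(m+1) * D - q := by
        have hpos : 0 < q^(m+1) - 1 := by
          have : q ≤ q^(m+1) := Nat.le_self_pow (by omega) q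
          omega
        refine Nat.le_of_mul_le_mul_right ?_ hpos
        calc (q * T.card) * (q^(m+1) - 1) = q * (T.card * (q^(m+1) - 1)) := by ring
          _ = q * pairs.card := by rw [hcount1]
          _ ≤ (q^(m+2) - 1) * (q^m * D - q) := hcount2
          _ ≤ (q^(m+1) - 1) * (q^(m+1) * D - q) := harith
          _ = (q^(m+1) * D - q) * (q^(m+1) - 1) := by ring
      have htotal : Nat.card {v : Fin (m+2) → F // eval v f = 0} = T.card + 1 := by
        rw [Nat.card_eq_fintype_card, Fintype.card_subtype]
        have hins : univ.filter (fun v : Fin (m+2) → F => eval v f = 0) = insert 0 T := by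
          ext v
          simp only [hT, Finset.mem_insert, Finset.mem_filter, Finset.mem_univ, true_and]
          constructor
          · intro h
            by_cases hv : v = 0
            · exact Or.inl hv
            · exact Or.inr ⟨hv, h⟩
          · rintro (rfl | ⟨_, h⟩)
            · exact eval_zero_of_homog hd hhom
            · exact h
        rw [hins, Finset.card_insert_of_notMem (by simp [hT])]
      rw [htotal]
      have hqle : q ≤ q^(m+1) * D := by
        calc q ≤ q^(m+1) := Nat.le_self_pow (by omega) q
          _ ≤ q^(m+1) * D := Nat.le_mul_of_pos_right _ (by omega)
      calc q * (T.card + 1) = q * T.card + q := by ring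
        _ ≤ q^(m+1) * D := by omega

end SerreAux
namespace SerreAux
open MvPolynomial Finset

variable {F : Type*} [Field F] [Fintype F]

lemma card_nonzero_pred (N : ℕ) (p : Projectivization F (Fin (N+1) → F) → Prop)
    (p' : (Fin (N+1) → F) → Prop)
    (hcomp : ∀ (v : Fin (N+1) → F) (hv : v ≠ 0), p' v ↔ p (Projectivization.mk F v hv)) :
    Nat.card {v : Fin (N+1) → F // v ≠ 0 ∧ p' v}
      = (Fintype.card F - 1) * Nat.card {x : Projectivization F (Fin (N+1) → F) // p x} := by
  classical
  have E : {x : Projectivization F (Fin (N+1) → F) // p x} × Fˣ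
      ≃ {v : Fin (N+1) → F // v ≠ 0 ∧ p' v} := by
    refine Equiv.ofBijective (fun y => ⟨(y.2 : F) • y.1.1.rep, ?_, ?_⟩) ⟨?_, ?_⟩
    · exact smul_ne_zero (Units.ne_zero y.2) y.1.1.rep_nonzero
    · have hmk : Projectivization.mk F ((y.2 : F) • y.1.1.rep)
          (smul_ne_zero (Units.ne_zero y.2) y.1.1.rep_nonzero) = y.1.1 :=
        ((Projectivization.mk_eq_mk_iff F _ _ _ y.1.1.rep_nonzero).mpr
          ⟨y.2, rfl⟩).trans y.1.1.mk_rep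
      rw [hcomp _ (smul_ne_zero (Units.ne_zero y.2) y.1.1.rep_nonzero)]
      exact hmk.symm ▸ y.1.2
    · rintro ⟨⟨x, hx⟩, c⟩ ⟨⟨x', hx'⟩, c'⟩ h
      have hv : (c : F) • x.rep = (c' : F) • x'.rep := congrArg Subtype.val h
      have hxx : x = x' := by
        have h1 : Projectivization.mk F ((c : F) • x.rep)
            (smul_ne_zero (Units.ne_zero c) x.rep_nonzero) = x :=
          ((Projectivization.mk_eq_mk_iff F _ _ _ x.rep_nonzero).mpr ⟨c, rfl⟩).trans x.mk_rep
        have h2 : Projectivization.mk F ((c' : F) • x'.rep)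
            (smul_ne_zero (Units.ne_zero c') x'.rep_nonzero) = x' :=
          ((Projectivization.mk_eq_mk_iff F _ _ _ x'.rep_nonzero).mpr ⟨c', rfl⟩).trans x'.mk_rep
        rw [← h1, ← h2]
        exact (Projectivization.mk_eq_mk_iff F _ _ _ _).mpr ⟨1, by rw [one_smul, hv]⟩
      subst hxx
      have hcc : (c : F) = (c' : F) := by
        have := hv
        have hrep := x.rep_nonzero
        by_contra hne
        apply hrep
        have hsub : ((c : F) - (c' : F)) • x.rep = 0 := by
          rw [sub_smul, this, sub_self]
        rcases smul_eq_zero.mp hsub with h' | h'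
        · exact absurd (sub_eq_zero.mp h') hne
        · exact h'
      simp only [Prod.mk.injEq, Subtype.mk.injEq]
      exact ⟨by trivial, Units.ext hcc⟩
    · rintro ⟨v, hv, hp⟩
      obtain ⟨a, ha⟩ := Projectivization.exists_smul_eq_mk_rep F v hv
      refine ⟨⟨⟨Projectivization.mk F v hv, (hcomp v hv).mp hp⟩, a⁻¹⟩, ?_⟩
      apply Subtype.ext
      show (↑a⁻¹ : F) • (Projectivization.mk F v hv).rep = v
      rw [← ha]
      show a⁻¹ • a • v = v
      exact inv_smul_smul a v
  rw [← Nat.card_congr E, Nat.card_prod, mul_comm, Nat.card_eq_fintype_card,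
    Fintype.card_units]

lemma card_zeros_split (k : ℕ) (p' : (Fin k → F) → Prop) (h0 : p' 0) :
    Nat.card {v : Fin k → F // p' v} = Nat.card {v : Fin k → F // v ≠ 0 ∧ p' v} + 1 := by
  classical
  rw [Nat.card_eq_fintype_card, Nat.card_eq_fintype_card, Fintype.card_subtype,
    Fintype.card_subtype]
  have hins : univ.filter (fun v : Fin k → F => p' v)
      = insert 0 (univ.filter (fun v : Fin k → F => v ≠ 0 ∧ p' v)) := by
    ext v
    simp only [Finset.mem_insert, Finset.mem_filter, Finset.mem_univ, true_and]
    constructor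
    · intro h
      by_cases hv : v = 0
      · exact Or.inl hv
      · exact Or.inr ⟨hv, h⟩
    · rintro (rfl | ⟨_, h⟩)
      · exact h0
      · exact h
  rw [hins, Finset.card_insert_of_notMem (by simp)]

lemma card_nonzero (k : ℕ) :
    Nat.card {v : Fin k → F // v ≠ 0} = Fintype.card F ^ k - 1 := by
  classical
  rw [Nat.card_eq_fintype_card, Fintype.card_subtype]
  rw [Finset.filter_ne', Finset.card_erase_of_mem (Finset.mem_univ _), Finset.card_univ,
    Fintype.card_fun, Fintype.card_fin]

end SerreAux

open SerreAux Finset in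
/-- Serre's bound: a hypersurface `H ⊆ ℙ^N(𝔽_q)` of degree `δ` (zero locus of a nonzero
homogeneous polynomial of degree `δ`) has at most `δ·q^{N−1} + Π_{N−2}` rational points,
where `Π_m = 1 + q + ⋯ + q^m`. In particular if this bound is `< Π_N` then some point of
`ℙ^N(𝔽_q)` is not on `H`. (Vanishing of a homogeneous polynomial at a projective point is
tested on the chosen representative `x.rep`, which is independent of the choice.) -/
theorem serre_hypersurface_bound
    (F : Type*) [Field F] [Fintype F] (q : ℕ) (hq : q = Fintype.card F)
    (N δ : ℕ) (hN : 2 ≤ N) (hδ : 0 < δ)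
    (f : MvPolynomial (Fin (N + 1)) F) (hf : f ≠ 0) (hhom : f.IsHomogeneous δ) :
    Nat.card {x : Projectivization F (Fin (N + 1) → F) // MvPolynomial.eval x.rep f = 0}
      ≤ δ * q ^ (N - 1) + ∑ i ∈ Finset.range (N - 1), q ^ i ∧
    (δ * q ^ (N - 1) + ∑ i ∈ Finset.range (N - 1), q ^ i
        < ∑ i ∈ Finset.range (N + 1), q ^ i →
      ∃ x : Projectivization F (Fin (N + 1) → F), MvPolynomial.eval x.rep f ≠ 0) := by
  have hq2 : 2 ≤ q := by rw [hq]; exact Fintype.one_lt_card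
  have hmain := main_bound N f hδ hf hhom
  rw [← hq] at hmain
  have hsplit := card_zeros_split (N+1) (fun v => MvPolynomial.eval v f = 0)
    (eval_zero_of_homog hδ hhom)
  have hcomp : ∀ (v : Fin (N+1) → F) (hv : v ≠ 0),
      MvPolynomial.eval v f = 0 ↔ MvPolynomial.eval (Projectivization.mk F v hv).rep f = 0 := by
    intro v hv
    obtain ⟨a, ha⟩ := Projectivization.exists_smul_eq_mk_rep F v hv
    have heval : MvPolynomial.eval ((Projectivization.mk F v hv).rep) f
        = (a : F)^δ * MvPolynomial.eval v f := by
      rw [← ha]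
      show MvPolynomial.eval ((a : F) • v) f = _
      exact eval_smul_of_isHomogeneous f hhom _ v
    constructor
    · intro h; rw [heval, h, mul_zero]
    · intro h
      rw [heval] at h
      rcases mul_eq_zero.mp h with h' | h'
      · exact absurd h' (pow_ne_zero _ (Units.ne_zero a))
      · exact h'
  have hfib := card_nonzero_pred N
    (fun x : Projectivization F (Fin (N+1) → F) => MvPolynomial.eval x.rep f = 0)
    (fun v => MvPolynomial.eval v f = 0) hcomp
  rw [← hq] at hfib
  set P := Nat.card {x : Projectivization F (Fin (N + 1) → F) //
    MvPolynomial.eval x.rep f = 0} with hPdef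
  have htot : Nat.card {v : Fin (N+1) → F // MvPolynomial.eval v f = 0} = (q-1)*P + 1 := by
    rw [hsplit, hfib]
  rw [htot] at hmain
  have hNpow : q^N = q * q^(N-1) := by
    have hN1 : N - 1 + 1 = N := by omega
    rw [← hN1, pow_succ]
    exact Nat.mul_comm _ _
  have hstep : (q-1)*P + 1 ≤ q^(N-1) * ((q-1)*δ + 1) := by
    refine Nat.le_of_mul_le_mul_left ?_ (show 0 < q by omega)
    calc q * ((q-1)*P + 1) ≤ q^N * ((q-1)*δ + 1) := hmain
      _ = q * (q^(N-1) * ((q-1)*δ + 1)) := by rw [hNpow]; ring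
  have hgeom := geom_sum_nat q (N-1) (by omega)
  have hpw : 1 ≤ q^(N-1) := Nat.one_le_pow _ _ (by omega)
  have hexp : q^(N-1) * ((q-1)*δ + 1) = (q-1)*(δ*q^(N-1)) + q^(N-1) := by ring
  have hexp2 : (q-1)*(δ*q^(N-1) + ∑ i ∈ Finset.range (N-1), q^i)
      = (q-1)*(δ*q^(N-1)) + (q-1)*(∑ i ∈ Finset.range (N-1), q^i) := by ring
  have hkey : (q-1)*P ≤ (q-1)*(δ*q^(N-1) + ∑ i ∈ Finset.range (N-1), q^i) := by omega
  have hgoal1 : P ≤ δ*q^(N-1) + ∑ i ∈ Finset.range (N-1), q^i :=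
    Nat.le_of_mul_le_mul_left hkey (by omega)
  refine ⟨hgoal1, ?_⟩
  intro hlt
  by_contra hall
  push_neg at hall
  have hPall : P = Nat.card (Projectivization F (Fin (N+1) → F)) :=
    Nat.card_congr (Equiv.subtypeUnivEquiv hall)
  have hfib2 := card_nonzero_pred N (fun _ : Projectivization F (Fin (N+1) → F) => True)
    (fun _ => True) (fun _ _ => Iff.rfl)
  rw [← hq] at hfib2
  have hnz : Nat.card {v : Fin (N+1) → F // v ≠ 0 ∧ True} = q^(N+1) - 1 := by
    rw [Nat.card_congr (Equiv.subtypeEquivRight (q := fun v : Fin (N+1) → F => v ≠ 0)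
      (fun v => by simp))]
    rw [hq]
    exact card_nonzero (N+1)
  have hCPuniv : Nat.card {x : Projectivization F (Fin (N+1) → F) // True}
      = Nat.card (Projectivization F (Fin (N+1) → F)) :=
    Nat.card_congr (Equiv.subtypeUnivEquiv (fun _ => trivial))
  have hCP : (q-1) * Nat.card (Projectivization F (Fin (N+1) → F)) = q^(N+1) - 1 := by
    rw [← hCPuniv, ← hfib2]
    exact hnz
  have hgeom2 := geom_sum_nat q (N+1) (by omega)
  have hpw2 : 1 ≤ q^(N+1) := Nat.one_le_pow _ _ (by omega)
  have hCPeq : Nat.card (Projectivization F (Fin (N+1) → F))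
      = ∑ i ∈ Finset.range (N+1), q^i := by
    refine Nat.eq_of_mul_eq_mul_left (show 0 < q - 1 by omega) ?_
    omega
  rw [hPall, hCPeq] at hgoal1
  omega
end
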